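/- Let G be an inverse limit of finite groups G_i with canonical projections π_i : G → G_i and connecting epimorphisms π_{ji} : G_j → G_i for j ≥ i. Let 𝓘 be the set of involutions (elements of order 2) of G, and suppose every δ ∈ 𝓘 is self-centralizing (its centralizer in G is {1, δ}). Let i be an index such that π_i(δ) ≠ 1 for all δ ∈ 𝓘. Then there exists j ≥ i such that for every δ ∈ 𝓘, the image under π_{ji} of the centralizer of π_j(δ) in G_j is exactly {1, π_i(δ)}. -/

import Mathlib

open CategoryTheory Opposite


/-- The inverse limit of the system `(G i, π)`, as a subgroup of the product. -/
def invLimit {ι : Type} [Preorder ι] (G : ι → Type) [∀ i, Group (G i)]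
    (π : ∀ ⦃i j : ι⦄, i ≤ j → G j →* G i) : Subgroup (∀ i, G i) where
  carrier := {x | ∀ (i j : ι) (h : i ≤ j), π h (x j) = x i}
  one_mem' := by intro i j h; simp
  mul_mem' := by intro x y hx hy i j h; simp [map_mul, hx i j h, hy i j h]
  inv_mem' := by intro x hx i j h; simp [map_inv, hx i j h]

/-- The canonical projection of the inverse limit to `G i`. -/
def invLimitProj {ι : Type} [Preorder ι] (G : ι → Type) [∀ i, Group (G i)]
    (π : ∀ ⦃i j : ι⦄, i ≤ j → G j →* G i) (i : ι) : invLimit G π →* G i :=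
  (Pi.evalMonoidHom G i).comp (invLimit G π).subtype

/-- Kőnig-type compactness: a directed inverse system of finite nonempty sets has a section. -/
theorem exists_section_aux {ι : Type} [Preorder ι] [IsDirected ι (· ≤ ·)]
    (X : ι → Type) [∀ i, Finite (X i)] [∀ i, Nonempty (X i)]
    (f : ∀ ⦃i j : ι⦄, i ≤ j → X j → X i)
    (hid : ∀ (i : ι) (x : X i), f (le_refl i) x = x)
    (hcomp : ∀ (i j k : ι) (hij : i ≤ j) (hjk : j ≤ k) (x : X k),
      f hij (f hjk x) = f (hij.trans hjk) x) :
    ∃ s : ∀ i, X i, ∀ (i j : ι) (h : i ≤ j), f h (s j) = s i := by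
  let F : ιᵒᵖ ⥤ Type := {
    obj := fun i => X i.unop
    map := fun {a b} g => TypeCat.ofHom fun x => f (leOfHom g.unop) x
    map_id := fun a => ConcreteCategory.hom_ext _ _ fun x => hid a.unop x
    map_comp := fun {a b c} g h => ConcreteCategory.hom_ext _ _ fun x =>
      (hcomp c.unop b.unop a.unop (leOfHom h.unop) (leOfHom g.unop) x).symm }
  haveI : ∀ j : ιᵒᵖ, Finite (F.obj j) := fun j => inferInstanceAs (Finite (X j.unop))
  haveI : ∀ j : ιᵒᵖ, Nonempty (F.obj j) := fun j => inferInstanceAs (Nonempty (X j.unop))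
  obtain ⟨s, hs⟩ := nonempty_sections_of_finite_inverse_system F
  exact ⟨fun i => s (Opposite.op i), fun i j h => hs ((homOfLE h).op)⟩

/-- The set of "counterexample pairs" seen at level `j`. -/
def badSet {ι : Type} [Preorder ι] (G : ι → Type) [∀ i, Group (G i)]
    (π : ∀ ⦃i j : ι⦄, i ≤ j → G j →* G i) (i₀ j : ι) : Set (G j × G j) :=
  {p | ∃ (k : ι) (hjk : j ≤ k) (hik : i₀ ≤ k) (δ : invLimit G π), δ ^ 2 = 1 ∧ δ ≠ 1 ∧
    ∃ t : G k, t * invLimitProj G π k δ = invLimitProj G π k δ * t ∧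
      π hik t ≠ 1 ∧ π hik t ≠ invLimitProj G π i₀ δ ∧
      p.1 = π hjk (invLimitProj G π k δ) ∧ p.2 = π hjk t}

/-- Let `G = lim G i` be an inverse limit of finite groups in which every
involution is self-centralizing, and let `i₀` be an index such that no involution projects
to `1` in `G i₀`.  Then there is `j ≥ i₀` such that for every involution `δ`, the image
under `π_{j i₀}` of the centralizer of `π_j δ` in `G j` is exactly `{1, π_{i₀} δ}`. -/
theorem exists_index_killing_centralizers {ι : Type} [Preorder ι]
    [IsDirected ι (· ≤ ·)]
    (G : ι → Type) [∀ i, Group (G i)] [∀ i, Finite (G i)]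
    (π : ∀ ⦃i j : ι⦄, i ≤ j → G j →* G i)
    (hπid : ∀ i, π (le_refl i) = MonoidHom.id (G i))
    (hπcomp : ∀ (i j k : ι) (hij : i ≤ j) (hjk : j ≤ k),
      (π hij).comp (π hjk) = π (hij.trans hjk))
    (hπsurj : ∀ (i j : ι) (h : i ≤ j), Function.Surjective (π h))
    (hprojsurj : ∀ i, Function.Surjective (invLimitProj G π i))
    (hself : ∀ δ : invLimit G π, δ ^ 2 = 1 → δ ≠ 1 →
      ∀ σ : invLimit G π, σ * δ = δ * σ → σ = 1 ∨ σ = δ)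
    (i₀ : ι)
    (hi₀ : ∀ δ : invLimit G π, δ ^ 2 = 1 → δ ≠ 1 → invLimitProj G π i₀ δ ≠ 1) :
    ∃ j, ∃ hj : i₀ ≤ j, ∀ δ : invLimit G π, δ ^ 2 = 1 → δ ≠ 1 →
      (π hj) '' {τ : G j | τ * invLimitProj G π j δ = invLimitProj G π j δ * τ}
        = {1, invLimitProj G π i₀ δ} := by
  by_contra hcon
  push_neg at hcon
  -- Easy inclusion: `{1, π_{i₀} δ}` is always contained in the image of the centralizer.
  have heasy : ∀ (j : ι) (hj : i₀ ≤ j) (δ : invLimit G π), δ ^ 2 = 1 →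
      ({1, invLimitProj G π i₀ δ} : Set (G i₀)) ⊆
        (π hj) '' {τ : G j | τ * invLimitProj G π j δ = invLimitProj G π j δ * τ} := by
    intro j hj δ h2 x hx
    rcases hx with rfl | rfl
    · exact ⟨1, by simp, map_one _⟩
    · exact ⟨invLimitProj G π j δ, rfl, δ.2 i₀ j hj⟩
  -- Counterexample data at every level `k ≥ i₀`.
  have hctr : ∀ (k : ι) (hik : i₀ ≤ k), ∃ δ : invLimit G π, δ ^ 2 = 1 ∧ δ ≠ 1 ∧
      ∃ t : G k, t * invLimitProj G π k δ = invLimitProj G π k δ * t ∧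
        π hik t ≠ 1 ∧ π hik t ≠ invLimitProj G π i₀ δ := by
    intro k hik
    obtain ⟨δ, h2, h1, hne⟩ := hcon k hik
    have hnsub : ¬ ((π hik) '' {τ : G k | τ * invLimitProj G π k δ = invLimitProj G π k δ * τ}
        ⊆ {1, invLimitProj G π i₀ δ}) := fun hsub =>
      hne (Set.Subset.antisymm hsub (heasy k hik δ h2))
    obtain ⟨x, hxmem, hxnot⟩ := Set.not_subset.mp hnsub
    obtain ⟨t, htc, rfl⟩ := hxmem
    simp only [Set.mem_insert_iff, Set.mem_singleton_iff, not_or] at hxnot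
    exact ⟨δ, h2, h1, t, htc, hxnot.1, hxnot.2⟩
  -- The bad sets are nonempty.
  haveI hne : ∀ j, Nonempty (badSet G π i₀ j) := by
    intro j
    obtain ⟨k, hjk, hik⟩ := directed_of (· ≤ ·) j i₀
    obtain ⟨δ, h2, h1, t, htc, ht1, ht2⟩ := hctr k hik
    exact ⟨⟨(π hjk (invLimitProj G π k δ), π hjk t),
      ⟨k, hjk, hik, δ, h2, h1, t, htc, ht1, ht2, rfl, rfl⟩⟩⟩
  -- The connecting maps restrict to the bad sets.
  have hmap : ∀ ⦃i j : ι⦄ (h : i ≤ j) (p : G j × G j), p ∈ badSet G π i₀ j →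
      (π h p.1, π h p.2) ∈ badSet G π i₀ i := by
    rintro i j h p ⟨k, hjk, hik, δ, h2, h1, t, htc, ht1, ht2, he1, he2⟩
    refine ⟨k, h.trans hjk, hik, δ, h2, h1, t, htc, ht1, ht2, ?_, ?_⟩
    · show π h p.1 = _
      rw [he1, ← MonoidHom.comp_apply, hπcomp]
    · show π h p.2 = _
      rw [he2, ← MonoidHom.comp_apply, hπcomp]
  -- Apply compactness.
  obtain ⟨s, hs⟩ := exists_section_aux (fun j => badSet G π i₀ j)
    (fun i j h p => ⟨(π h p.1.1, π h p.1.2), hmap h p.1 p.2⟩)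
    (by
      intro i x
      apply Subtype.ext
      apply Prod.ext
      · show π (le_refl i) x.1.1 = x.1.1
        rw [hπid]; rfl
      · show π (le_refl i) x.1.2 = x.1.2
        rw [hπid]; rfl)
    (by
      intro i j k hij hjk x
      apply Subtype.ext
      apply Prod.ext
      · show π hij (π hjk x.1.1) = π (hij.trans hjk) x.1.1
        rw [← MonoidHom.comp_apply, hπcomp]
      · show π hij (π hjk x.1.2) = π (hij.trans hjk) x.1.2
        rw [← MonoidHom.comp_apply, hπcomp])
  -- Assemble the limit elements.
  set d : ∀ i, G i := fun i => (s i).1.1 with hd_def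
  set t : ∀ i, G i := fun i => (s i).1.2 with ht_def
  have hd : d ∈ invLimit G π := fun i j h => congrArg (fun q => q.1.1) (hs i j h)
  have ht : t ∈ invLimit G π := fun i j h => congrArg (fun q => q.1.2) (hs i j h)
  -- Local descriptions of `d i` and `t i`.
  have hdesc : ∀ i, ∃ (k : ι) (hjk : i ≤ k) (hik : i₀ ≤ k) (δ : invLimit G π),
      δ ^ 2 = 1 ∧ δ ≠ 1 ∧ ∃ τ : G k,
        τ * invLimitProj G π k δ = invLimitProj G π k δ * τ ∧
        π hik τ ≠ 1 ∧ π hik τ ≠ invLimitProj G π i₀ δ ∧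
        d i = π hjk (invLimitProj G π k δ) ∧ t i = π hjk τ := fun i => (s i).2
  set δ' : invLimit G π := ⟨d, hd⟩ with hδ'_def
  set σ : invLimit G π := ⟨t, ht⟩ with hσ_def
  have hδ'2 : δ' ^ 2 = 1 := by
    apply Subtype.ext
    funext i
    obtain ⟨k, hjk, hik, δ, h2, h1, τ, _, _, _, he1, _⟩ := hdesc i
    have hcoe : ((δ' ^ 2 : invLimit G π) : ∀ i, G i) i = d i * d i := by
      show (d i) ^ 2 = d i * d i
      rw [pow_two]
    rw [hcoe]
    have : invLimitProj G π k δ * invLimitProj G π k δ = 1 := by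
      rw [← map_mul, ← pow_two, h2, map_one]
    rw [he1, ← map_mul, this, map_one]
    rfl
  have hδ'1 : δ' ≠ 1 := by
    intro hone
    obtain ⟨k, hjk, hik, δ, h2, h1, τ, _, _, _, he1, _⟩ := hdesc i₀
    have hdi : d i₀ = invLimitProj G π i₀ δ := by
      rw [he1]; exact δ.2 i₀ k hjk
    have : d i₀ = 1 := congrFun (congrArg Subtype.val hone) i₀
    exact hi₀ δ h2 h1 (hdi ▸ this)
  have hcomm : σ * δ' = δ' * σ := by
    apply Subtype.ext
    funext i
    obtain ⟨k, hjk, hik, δ, h2, h1, τ, hτc, _, _, he1, he2⟩ := hdesc i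
    show t i * d i = d i * t i
    rw [he1, he2, ← map_mul, ← map_mul, hτc]
  rcases hself δ' hδ'2 hδ'1 σ hcomm with h | h
  · obtain ⟨k, hjk, hik, δ, h2, h1, τ, _, hτ1, _, _, he2⟩ := hdesc i₀
    have : t i₀ = 1 := congrFun (congrArg Subtype.val h) i₀
    rw [he2] at this
    exact hτ1 this
  · obtain ⟨k, hjk, hik, δ, h2, h1, τ, _, _, hτ2, he1, he2⟩ := hdesc i₀
    have : t i₀ = d i₀ := congrFun (congrArg Subtype.val h) i₀
    rw [he2, he1] at this
    have hdi : π hjk (invLimitProj G π k δ) = invLimitProj G π i₀ δ := δ.2 i₀ k hjk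
    exact hτ2 (this.trans hdi)
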